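/- Let X ⊆ ℝ^d be a nonempty compact convex set with diameter D = max{‖x−y‖ : x, y ∈ X} and let ‖X‖ = max{‖x − y_1‖ : x ∈ X}. Suppose the cost vectors b_1, …, b_N ∈ ℝ^d satisfy ‖b_i‖ ≤ L for all i, and let x_1, …, x_N be the actions of the lazy anytime Subgradient algorithm on X with base point y_1 and parameter η > 0. Then for x* any minimiser of x ↦ Σ_{i=1}^N b_i·x over X, the regret satisfies Σ_{i=1}^N b_i·(x_i − x*) ≤ L·D + (‖X‖²/(2η) + 2η·L²)·√N. Moreover, if L > 0, y_1 ∈ X, X is not a single point, and η = ‖X‖/(2L), then Σ_{i=1}^N b_i·(x_i − x*) ≤ L·D + 2L·‖X‖·√N ≤ 3·L·D·√N. -/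

import Mathlib

open Finset
open scoped RealInnerProductSpace

/-- `IsProjOn X p q` says that `q` is the Euclidean nearest-point projection of `p`
onto the set `X`. -/
def IsProjOn {d : ℕ} (X : Set (EuclideanSpace ℝ (Fin d)))
    (p q : EuclideanSpace ℝ (Fin d)) : Prop :=
  q ∈ X ∧ ∀ z ∈ X, ‖p - q‖ ≤ ‖p - z‖

lemma icc_to_range (f : ℕ → ℝ) (N : ℕ) : ∑ i ∈ Icc 1 N, f i = ∑ i ∈ range N, f (i+1) := by
  induction N with
  | zero => simp
  | succ n ih => rw [Finset.sum_Icc_succ_top (by omega), ih, Finset.sum_range_succ]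

lemma isProjOn_inner_le {d : ℕ} {X : Set (EuclideanSpace ℝ (Fin d))} (hX : Convex ℝ X)
    {p q : EuclideanSpace ℝ (Fin d)} (h : IsProjOn X p q) {z : EuclideanSpace ℝ (Fin d)}
    (hz : z ∈ X) : ⟪p - q, z - q⟫ ≤ 0 := by
  by_contra hpos
  push_neg at hpos
  set c : ℝ := ⟪p - q, z - q⟫ with hc
  set M : ℝ := ‖z - q‖^2 with hMdef
  have hM0 : 0 ≤ M := by positivity
  set θ : ℝ := min 1 (c/(M+1)) with hθdef
  have hθpos : 0 < θ := lt_min one_pos (div_pos hpos (by linarith))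
  have hθ1 : θ ≤ 1 := min_le_left _ _
  have hmem : θ • z + (1-θ) • q ∈ X := hX hz h.1 (le_of_lt hθpos) (by linarith) (by ring)
  have hle := h.2 _ hmem
  have hexp : p - (θ • z + (1-θ) • q) = (p - q) - θ • (z - q) := by
    rw [smul_sub, sub_smul, one_smul]
    abel
  have hsq : ‖p - q‖^2 ≤ ‖p - q‖^2 - 2*(θ*c) + θ^2 * M := by
    calc ‖p - q‖^2 ≤ ‖p - (θ • z + (1-θ) • q)‖^2 :=
          pow_le_pow_left₀ (norm_nonneg _) hle 2
    _ = ‖p - q‖^2 - 2*(θ*c) + θ^2 * M := by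
        rw [hexp, norm_sub_sq_real, real_inner_smul_right, norm_smul, mul_pow, ← hc,
          Real.norm_eq_abs, sq_abs, ← hMdef]
  have key : 2*c ≤ θ*M := by
    apply le_of_mul_le_mul_right _ hθpos
    nlinarith [hsq]
  have hθ2 : θ*(M+1) ≤ c := by
    rw [← le_div_iff₀ (by linarith : (0:ℝ) < M+1)]
    exact min_le_right _ _
  nlinarith [key, hθ2, hθpos, hpos]

lemma isProjOn_strong {d : ℕ} {X : Set (EuclideanSpace ℝ (Fin d))} (hX : Convex ℝ X)
    {y1 B q : EuclideanSpace ℝ (Fin d)} {c : ℝ}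
    (h : IsProjOn X (y1 - c • B) q) {z : EuclideanSpace ℝ (Fin d)} (hz : z ∈ X) :
    2*c*⟪B, q⟫ + ‖q - y1‖^2 + ‖z - q‖^2 ≤ 2*c*⟪B, z⟫ + ‖z - y1‖^2 := by
  have key := isProjOn_inner_le hX h hz
  have e1 : ⟪y1 - c • B - q, z - q⟫ = ⟪y1 - q, z - q⟫ - c * ⟪B, z - q⟫ := by
    rw [sub_right_comm, inner_sub_left, real_inner_smul_left]
  have e2 : ‖z - y1‖^2 = ‖q - y1‖^2 + 2 * ⟪q - y1, z - q⟫ + ‖z - q‖^2 := by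
    have hzy : z - y1 = (q - y1) + (z - q) := by abel
    rw [hzy, norm_add_sq_real]
  have e4 : ⟪y1 - q, z - q⟫ = - ⟪q - y1, z - q⟫ := by
    rw [← inner_neg_left]; congr 1; abel
  have e5 : c * ⟪B, z⟫ - c * ⟪B, q⟫ = c * ⟪B, z - q⟫ := by
    rw [inner_sub_right]; ring
  rw [e1, e4] at key
  linarith [key, e2, e5]

lemma regret_div_helper {a b pq r c : ℝ} (hc : 0 < c) (h : 2*c*a + pq ≤ 2*c*b + r) :
    a + pq/(2*c) ≤ b + r/(2*c) := by
  rw [← sub_nonneg]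
  have hne : (2*c) ≠ 0 := by positivity
  have heq : b + r/(2*c) - (a + pq/(2*c)) = (2*c*b + r - (2*c*a + pq))/(2*c) := by
    field_simp
  rw [heq]
  exact div_nonneg (by linarith) (by positivity)
set_option maxHeartbeats 2000000 in
/-- Theorem 1 (worst-case regret of the lazy anytime Subgradient algorithm). -/
theorem subgradient_worst_case_regret {d : ℕ}
    (X : Set (EuclideanSpace ℝ (Fin d)))
    (hXne : X.Nonempty) (hXcompact : IsCompact X) (hXconvex : Convex ℝ X)
    (y1 : EuclideanSpace ℝ (Fin d)) (D K L η : ℝ)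
    (hD : IsGreatest {r : ℝ | ∃ x ∈ X, ∃ y ∈ X, r = ‖x - y‖} D)
    (hK : IsGreatest {r : ℝ | ∃ x ∈ X, r = ‖x - y1‖} K)
    (hη : 0 < η)
    (N : ℕ) (hN : 1 ≤ N)
    (b : ℕ → EuclideanSpace ℝ (Fin d))
    (hb : ∀ i, 1 ≤ i → i ≤ N → ‖b i‖ ≤ L)
    (x : ℕ → EuclideanSpace ℝ (Fin d))
    (hx1 : IsProjOn X y1 (x 1))
    (hxn : ∀ n, 2 ≤ n →
      IsProjOn X
        (y1 - (η / Real.sqrt ((n - 1 : ℕ) : ℝ)) • ∑ i ∈ Icc 1 (n - 1), b i) (x n))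
    (xstar : EuclideanSpace ℝ (Fin d)) (hxstar : xstar ∈ X)
    (hxstarmin : ∀ z ∈ X,
      ∑ i ∈ Icc 1 N, ⟪b i, xstar⟫ ≤ ∑ i ∈ Icc 1 N, ⟪b i, z⟫) :
    (∑ i ∈ Icc 1 N, ⟪b i, x i - xstar⟫ ≤
        L * D + (K ^ 2 / (2 * η) + 2 * η * L ^ 2) * Real.sqrt N) ∧
    (0 < L → y1 ∈ X → (∃ u ∈ X, ∃ w ∈ X, u ≠ w) → η = K / (2 * L) →
      ∑ i ∈ Icc 1 N, ⟪b i, x i - xstar⟫ ≤ L * D + 2 * L * K * Real.sqrt N ∧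
      L * D + 2 * L * K * Real.sqrt N ≤ 3 * L * D * Real.sqrt N) := by
  -- basic nonnegativity facts
  have hL0 : 0 ≤ L := (norm_nonneg (b 1)).trans (hb 1 le_rfl hN)
  have hD0 : 0 ≤ D := by
    obtain ⟨a, -, c, -, hr⟩ := hD.1
    rw [hr]; exact norm_nonneg _
  -- notation
  obtain ⟨Bs, hBs⟩ : ∃ Bs : ℕ → EuclideanSpace ℝ (Fin d), Bs = fun t => ∑ i ∈ Icc 1 t, b i :=
    ⟨_, rfl⟩
  obtain ⟨e, he⟩ : ∃ e : ℕ → ℝ, e = fun t => η / Real.sqrt (max t 1 : ℕ) := ⟨_, rfl⟩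
  obtain ⟨F, hF⟩ : ∃ F : ℕ → EuclideanSpace ℝ (Fin d) → ℝ,
      F = fun t z => ⟪Bs t, z⟫ + ‖z - y1‖^2 / (2 * e t) := ⟨_, rfl⟩
  have hsqrtpos : ∀ t : ℕ, 0 < Real.sqrt (max t 1 : ℕ) := by
    intro t
    apply Real.sqrt_pos.mpr
    have : 0 < max t 1 := by omega
    exact_mod_cast this
  have hepos : ∀ t, 0 < e t := by
    intro t
    simp only [he]
    exact div_pos hη (hsqrtpos t)
  have he_anti : ∀ t : ℕ, e (t+1) ≤ e t := by
    intro t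
    simp only [he]
    apply div_le_div_of_nonneg_left hη.le (hsqrtpos t)
    apply Real.sqrt_le_sqrt
    have : max t 1 ≤ max (t+1) 1 := by omega
    exact_mod_cast this
  -- the projection characterization at every step
  have hproj : ∀ t : ℕ, IsProjOn X (y1 - e t • Bs t) (x (t+1)) := by
    intro t
    match t with
    | 0 =>
      have hBs0 : Bs 0 = 0 := by simp [hBs]
      rw [hBs0, smul_zero, sub_zero]
      exact hx1
    | (s+1) =>
      have h2 := hxn (s+2) (by omega)
      have hidx : (s+2) - 1 = s + 1 := rfl
      rw [hidx] at h2
      have hmax : max (s+1) 1 = s+1 := by omega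
      have hes : e (s+1) = η / Real.sqrt ((s+1 : ℕ) : ℝ) := by
        simp only [he]
        rw [hmax]
      rw [hes, hBs]
      have h3 : s+1+1 = s+2 := rfl
      rw [h3]
      exact h2
  have hmem : ∀ t : ℕ, x (t+1) ∈ X := fun t => (hproj t).1
  -- key inequality: x (t+1) strongly minimizes F t on X
  have hkey' : ∀ t : ℕ, ∀ z ∈ X,
      F t (x (t+1)) + ‖z - x (t+1)‖^2/(2 * e t) ≤ F t z := by
    intro t z hz
    have h := isProjOn_strong hXconvex (hproj t) hz
    have h2 := regret_div_helper (a := ⟪Bs t, x (t+1)⟫) (b := ⟪Bs t, z⟫)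
      (pq := ‖x (t+1) - y1‖^2 + ‖z - x (t+1)‖^2) (r := ‖z - y1‖^2) (hepos t)
      (by linarith)
    rw [add_div] at h2
    simp only [hF]
    linarith
  -- Bs recursion
  have hBsucc : ∀ t : ℕ, Bs (t+1) = Bs t + b (t+1) := by
    intro t
    simp only [hBs]
    exact Finset.sum_Icc_succ_top (by omega) b
  -- F monotone in t
  have hFmono : ∀ (t : ℕ) (z : EuclideanSpace ℝ (Fin d)),
      F t z + ⟪b (t+1), z⟫ ≤ F (t+1) z := by
    intro t z
    simp only [hF]
    rw [hBsucc t, inner_add_left]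
    have hd : ‖z - y1‖^2 / (2 * e t) ≤ ‖z - y1‖^2 / (2 * e (t+1)) := by
      apply div_le_div_of_nonneg_left (by positivity) (by linarith [hepos (t+1)])
      linarith [he_anti t]
    linarith
  -- per-step regret bound
  have hterm : ∀ t ∈ Icc 1 N,
      ⟪b t, x t⟫ + (F (t-1) (x t) - F t (x (t+1))) ≤ e (t-1) * L^2 / 2 := by
    intro t ht
    rw [Finset.mem_Icc] at ht
    obtain ⟨s, rfl⟩ : ∃ s, t = s + 1 := ⟨t - 1, by omega⟩
    have hidx : (s+1) - 1 = s := rfl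
    rw [hidx]
    have hxx : x (s+1+1) = x (s+2) := rfl
    rw [hxx]
    have hA : F s (x (s+2)) + ⟪b (s+1), x (s+2)⟫ ≤ F (s+1) (x (s+2)) := hFmono s _
    have hB : F s (x (s+1)) + ‖x (s+2) - x (s+1)‖^2/(2 * e s) ≤ F s (x (s+2)) :=
      hkey' s _ (hmem (s+1))
    have hC : ⟪b (s+1), x (s+1)⟫ - ⟪b (s+1), x (s+2)⟫ ≤ L * ‖x (s+1) - x (s+2)‖ := by
      rw [← inner_sub_right]
      calc ⟪b (s+1), x (s+1) - x (s+2)⟫ ≤ ‖b (s+1)‖ * ‖x (s+1) - x (s+2)‖ :=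
            real_inner_le_norm _ _
      _ ≤ L * ‖x (s+1) - x (s+2)‖ :=
            mul_le_mul_of_nonneg_right (hb (s+1) (by omega) (by omega)) (norm_nonneg _)
    obtain ⟨r, hr⟩ : ∃ r : ℝ, r = ‖x (s+1) - x (s+2)‖ := ⟨_, rfl⟩
    have hrev : ‖x (s+2) - x (s+1)‖ = r := (norm_sub_rev _ _).trans hr.symm
    have hr0 : 0 ≤ r := hr ▸ norm_nonneg _
    rw [hrev] at hB
    rw [← hr] at hC
    have hes := hepos s
    have hcancel : r^2/(2 * e s) * (2 * e s) = r^2 := div_mul_cancel₀ _ (by positivity)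
    have hD2 : L * r - r^2/(2 * e s) ≤ e s * L^2/2 := by
      nlinarith [sq_nonneg (r - e s * L), hes, hcancel]
    linarith
  -- telescoping
  have htel : ∑ t ∈ Icc 1 N, (F (t-1) (x t) - F t (x (t+1))) = F 0 (x 1) - F N (x (N+1)) := by
    rw [icc_to_range (fun t => F (t-1) (x t) - F t (x (t+1))) N]
    have hcongr : ∀ i ∈ range N,
        F ((i+1)-1) (x (i+1)) - F (i+1) (x (i+1+1)) =
          (fun j => F j (x (j+1))) i - (fun j => F j (x (j+1))) (i+1) := by
      intro i _
      norm_num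
    rw [Finset.sum_congr rfl hcongr, Finset.sum_range_sub']
  -- sum splitting
  have hsum1 : ∑ i ∈ Icc 1 N, ⟪b i, x i - xstar⟫ =
      ∑ i ∈ Icc 1 N, ⟪b i, x i⟫ - ⟪Bs N, xstar⟫ := by
    simp only [hBs, inner_sub_right, sum_inner]
    exact Finset.sum_sub_distrib (f := fun i => ⟪b i, x i⟫) (g := fun i => ⟪b i, xstar⟫)
  have hsum2 : ∑ t ∈ Icc 1 N, (⟪b t, x t⟫ + (F (t-1) (x t) - F t (x (t+1)))) =
      ∑ i ∈ Icc 1 N, ⟪b i, x i⟫ + (F 0 (x 1) - F N (x (N+1))) := by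
    rw [Finset.sum_add_distrib, htel]
  have hsum3 : ∑ t ∈ Icc 1 N, (⟪b t, x t⟫ + (F (t-1) (x t) - F t (x (t+1)))) ≤
      ∑ t ∈ Icc 1 N, e (t-1) * L^2 / 2 :=
    Finset.sum_le_sum hterm
  -- bound on the sum of step sizes
  have hstepsum : ∑ t ∈ Icc 1 N, e (t-1) * L^2 / 2 ≤ 2*η*L^2 * Real.sqrt N := by
    have hper : ∀ t ∈ Icc 1 N, e (t-1) * L^2 / 2 ≤
        2*η*L^2 * (Real.sqrt t - Real.sqrt ((t-1 : ℕ) : ℝ)) := by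
      intro t ht
      rw [Finset.mem_Icc] at ht
      have hbase : e (t-1) ≤ 4*η*(Real.sqrt t - Real.sqrt ((t-1 : ℕ) : ℝ)) := by
        rcases t with _ | _ | s
        · omega
        · have he0 : e 0 = η := by simp only [he]; norm_num
          norm_num [he0, Real.sqrt_one]
          nlinarith [hη]
        · have hidx : (s+2) - 1 = s + 1 := rfl
          rw [hidx]
          have hmax : max (s+1) 1 = s+1 := by omega
          have hes : e (s+1) = η / Real.sqrt ((s+1 : ℕ) : ℝ) := by
            simp only [he]
            rw [hmax]
          rw [hes]
          obtain ⟨a, ha⟩ : ∃ a : ℝ, a = Real.sqrt ((s+1 : ℕ) : ℝ) := ⟨_, rfl⟩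
          obtain ⟨bb, hbb⟩ : ∃ bb : ℝ, bb = Real.sqrt ((s+2 : ℕ) : ℝ) := ⟨_, rfl⟩
          rw [← ha, ← hbb]
          have ha1 : 1 ≤ a := ha ▸ Real.one_le_sqrt.mpr (by exact_mod_cast Nat.le_add_left 1 s)
          have ha0 : 0 < a := by linarith
          have hbb0 : 0 ≤ bb := hbb ▸ Real.sqrt_nonneg _
          have hsq : bb^2 - a^2 = 1 := by
            rw [ha, hbb, Real.sq_sqrt (by positivity), Real.sq_sqrt (by positivity)]
            push_cast
            ring
          have hab : a ≤ bb := by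
            rw [ha, hbb]
            exact Real.sqrt_le_sqrt (by exact_mod_cast Nat.le_succ (s+1))
          have hb2a : bb ≤ 2*a := by nlinarith [hsq, ha1, ha0, hbb0]
          have h4 : 1 ≤ 4*(bb - a)*a := by
            nlinarith [mul_nonneg (sub_nonneg.2 hab) (by linarith : (0:ℝ) ≤ 3*a - bb), hsq]
          rw [div_le_iff₀ ha0]
          nlinarith [mul_le_mul_of_nonneg_left h4 hη.le]
      have hL2 : (0:ℝ) ≤ L^2/2 := by positivity
      calc e (t-1) * L^2 / 2 = (L^2/2) * e (t-1) := by ring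
      _ ≤ (L^2/2) * (4*η*(Real.sqrt t - Real.sqrt ((t-1 : ℕ) : ℝ))) :=
          mul_le_mul_of_nonneg_left hbase hL2
      _ = 2*η*L^2 * (Real.sqrt t - Real.sqrt ((t-1 : ℕ) : ℝ)) := by ring
    calc ∑ t ∈ Icc 1 N, e (t-1) * L^2 / 2
        ≤ ∑ t ∈ Icc 1 N, 2*η*L^2 * (Real.sqrt t - Real.sqrt ((t-1 : ℕ) : ℝ)) :=
          Finset.sum_le_sum hper
    _ = 2*η*L^2 * ∑ t ∈ Icc 1 N, (Real.sqrt t - Real.sqrt ((t-1 : ℕ) : ℝ)) := by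
          rw [Finset.mul_sum]
    _ = 2*η*L^2 * Real.sqrt N := by
          congr 1
          rw [icc_to_range (fun t => Real.sqrt t - Real.sqrt ((t-1 : ℕ) : ℝ)) N]
          have hcongr : ∀ i ∈ range N,
              (Real.sqrt ((i+1 : ℕ) : ℝ) - Real.sqrt ((((i+1)-1 : ℕ)) : ℝ)) =
                (fun j : ℕ => Real.sqrt (j : ℝ)) (i+1) - (fun j : ℕ => Real.sqrt (j : ℝ)) i := by
            intro i _
            norm_num
          rw [Finset.sum_congr rfl hcongr, Finset.sum_range_sub (fun j : ℕ => Real.sqrt (j : ℝ))]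
          simp
  -- F 0 (x 1) is nonnegative
  have hF0 : 0 ≤ F 0 (x 1) := by
    have hBs0 : Bs 0 = 0 := by simp [hBs]
    simp only [hF, hBs0, inner_zero_left, zero_add]
    exact div_nonneg (by positivity) (by linarith [hepos 0])
  -- bound on F N at xstar
  have hKx : ‖xstar - y1‖ ≤ K := hK.2 ⟨xstar, hxstar, rfl⟩
  have hsqrtNpos : 0 < Real.sqrt (N : ℝ) := Real.sqrt_pos.mpr (by exact_mod_cast hN)
  have hFN : F N xstar ≤ ⟪Bs N, xstar⟫ + K^2 * Real.sqrt N / (2*η) := by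
    have heN : e N = η / Real.sqrt (N : ℝ) := by
      simp only [he]
      rw [show max N 1 = N by omega]
    have hrw : ‖xstar - y1‖^2 / (2 * e N) = ‖xstar - y1‖^2 * Real.sqrt N / (2*η) := by
      rw [heN]
      field_simp
    simp only [hF]
    rw [hrw]
    have hsqle : ‖xstar - y1‖^2 ≤ K^2 := pow_le_pow_left₀ (norm_nonneg _) hKx 2
    have hd : ‖xstar - y1‖^2 * Real.sqrt N / (2*η) ≤ K^2 * Real.sqrt N / (2*η) := by
      gcongr
    linarith
  -- main regret bound
  have hFNx : F N (x (N+1)) ≤ F N xstar := by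
    have h := hkey' N xstar hxstar
    have h0 : 0 ≤ ‖xstar - x (N+1)‖^2/(2*e N) :=
      div_nonneg (by positivity) (by linarith [hepos N])
    linarith
  have hmain : ∑ i ∈ Icc 1 N, ⟪b i, x i - xstar⟫ ≤
      K^2 * Real.sqrt N/(2*η) + 2*η*L^2*Real.sqrt N := by
    rw [hsum1]
    linarith [hsum2, hsum3, hstepsum, hF0, hFNx, hFN]
  have hsplit : (K ^ 2 / (2 * η) + 2 * η * L ^ 2) * Real.sqrt N =
      K^2 * Real.sqrt N/(2*η) + 2*η*L^2*Real.sqrt N := by ring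
  have hLD : 0 ≤ L * D := mul_nonneg hL0 hD0
  constructor
  · rw [hsplit]
    linarith
  · intro hLpos hy1X hex hηK
    have hLne : L ≠ 0 := ne_of_gt hLpos
    have hKval : K = 2*L*η := by
      rw [hηK]
      field_simp
    have hKpos : 0 < K := by rw [hKval]; positivity
    have hKne : K ≠ 0 := ne_of_gt hKpos
    have heq : K^2/(2*η) + 2*η*L^2 = 2*L*K := by
      rw [hηK]
      field_simp
      ring
    constructor
    · have h2 : K^2 * Real.sqrt N/(2*η) + 2*η*L^2*Real.sqrt N = 2*L*K*Real.sqrt N := by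
        rw [← hsplit, heq]
      linarith
    · obtain ⟨xk, hxk, hKeq⟩ := hK.1
      have hKD : K ≤ D := hD.2 ⟨xk, hxk, y1, hy1X, hKeq⟩
      have hs1 : 1 ≤ Real.sqrt N := Real.one_le_sqrt.mpr (by exact_mod_cast hN)
      nlinarith [mul_nonneg (mul_nonneg hL0 (sub_nonneg.2 hKD)) (Real.sqrt_nonneg (N:ℝ)),
        mul_nonneg hLD (sub_nonneg.2 hs1)]
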